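/- arXiv:1410.6127 — 16 statements merged into one kernel-verified Lean document; each statement's English description precedes it below -/
import Mathlib

section
/- In a poset category C, a class of morphisms J that is closed under pushouts lifts on the left of a morphism f : A → B if and only if there is no factorization of f as A → C → B with A → C in J and C ≠ A. -/
/-!
We model a bicomplete skeletal poset as a complete lattice `α`, viewed as a category
with a (unique) morphism `a → b` iff `a ≤ b`.  Products are infima, coproducts are
suprema, pushouts of `a → b` along `a → c` are `c → b ⊔ c`, pullbacks of `x → y`
along `z → y` are `x ⊓ z → z`.  A class of morphisms is a relation `α → α → Prop`.
-/

variable {α : Type*} [CompleteLattice α]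

/-- The morphism `a → b` lifts on the left of the morphism `x → y`: every commutative
square (i.e. `a ≤ x` and `b ≤ y`) admits a diagonal lift `b → x` (i.e. `b ≤ x`). -/
def Lifts (a b x y : α) : Prop := a ≤ x → b ≤ y → b ≤ x

/-- In a poset category, a class `J` of morphisms closed under pushouts
lifts on the left of a morphism `f : A → B` iff there is no factorization `A → C → B`
with `A → C` in `J` and `C ≠ A`. -/
theorem liftingCriterion (J : α → α → Prop)
    (hJle : ∀ a b : α, J a b → a ≤ b)
    (hJpush : ∀ a b c : α, J a b → a ≤ c → J c (b ⊔ c))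
    (A B : α) (hf : A ≤ B) :
    (∀ x y : α, J x y → Lifts x y A B) ↔ ¬ ∃ C : α, J A C ∧ C ≤ B ∧ C ≠ A := by
  constructor
  · rintro h ⟨C, hJC, hCB, hCA⟩
    exact hCA (le_antisymm (h A C hJC le_rfl hCB) (hJle A C hJC))
  · intro h x y hxy hxA hyB
    have hpush := hJpush x y A hxy hxA
    have : y ⊔ A = A := by
      by_contra hne
      exact h ⟨y ⊔ A, hpush, sup_le hyB hf, hne⟩
    calc y ≤ y ⊔ A := le_sup_left
    _ = A := this
end

section
/- Let C be a bicomplete poset, W a subcategory satisfying strong 2-of-3, and χ a choice of centers. If {f_i : A_i → B_i}_{i∈I} is a family of morphisms each belonging to J_χ, then the coproduct ∐_i f_i belongs to J_χ. -/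
/-!
We model a bicomplete skeletal poset as a complete lattice `α`, viewed as a category
with a (unique) morphism `a → b` iff `a ≤ b`.  Products are infima, coproducts are
suprema, pushouts of `a → b` along `a → c` are `c → b ⊔ c`, pullbacks of `x → y`
along `z → y` are `x ⊓ z → z`.  A class of morphisms is a relation `α → α → Prop`.
-/

variable {α : Type*} [CompleteLattice α]

/-- Strong 2-of-3: whenever a composite `a → b → c` lies in `W`, so do both factors. -/
def S2OF3 (W : α → α → Prop) : Prop :=
  ∀ a b c : α, a ≤ b → b ≤ c → W a c → W a b ∧ W b c

/-- A choice of centers: a functor (monotone map) `χ` sending every morphism of `W`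
to an identity, such that the square `a ⊓ χ a → χ a`, `a ⊓ χ a → a`, `a → a ⊔ χ a`,
`χ a → a ⊔ χ a` lies in `W` for every object `a`. -/
def IsCenters (W : α → α → Prop) (χ : α → α) : Prop :=
  Monotone χ ∧ (∀ a b : α, W a b → χ a = χ b) ∧
    ∀ a : α, W (a ⊓ χ a) (χ a) ∧ W (a ⊓ χ a) a ∧ W a (a ⊔ χ a) ∧ W (χ a) (a ⊔ χ a)

/-- `J_χ`: morphisms `a → b` of `W` such that the morphism `b → χ b` exists. -/
def Jc (W : α → α → Prop) (χ : α → α) (a b : α) : Prop := W a b ∧ b ≤ χ b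

/-- `Q_χ`: morphisms `a → b` of `W` such that the morphism `χ a → a` exists. -/
def Qc (W : α → α → Prop) (χ : α → α) (a b : α) : Prop := W a b ∧ χ a ≤ a

/-- (Lemma on `J_χ`.)  If each `f i : A i → B i` lies in `J_χ`, then so
does the coproduct `⨆ A → ⨆ B`. -/
theorem Jc_coproduct (W : α → α → Prop) (χ : α → α)
    (hWle : ∀ a b : α, W a b → a ≤ b)
    (hWrefl : ∀ a : α, W a a)
    (hWtrans : ∀ a b c : α, W a b → W b c → W a c)
    (hS : S2OF3 W) (hχ : IsCenters W χ)
    (ι : Type*) (A B : ι → α) (hf : ∀ i, Jc W χ (A i) (B i)) :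
    Jc W χ (⨆ i, A i) (⨆ i, B i) := by
  obtain ⟨hmono, hχeq, hsq⟩ := hχ
  set a := ⨆ i, A i with ha
  have hAB : ∀ i, A i ≤ B i := fun i => hWle _ _ (hf i).1
  have hBχa : ∀ i, B i ≤ χ a := fun i => by
    calc B i ≤ χ (B i) := (hf i).2
    _ = χ (A i) := (hχeq _ _ (hf i).1).symm
    _ ≤ χ a := hmono (le_iSup A i)
  have h1 : a ≤ ⨆ i, B i := iSup_mono hAB
  have h2 : (⨆ i, B i) ≤ a ⊔ χ a := by
    exact le_trans (iSup_le fun i => hBχa i) le_sup_right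
  have hW : W a (⨆ i, B i) := (hS _ _ _ h1 h2 (hsq a).2.2.1).1
  refine ⟨hW, ?_⟩
  exact iSup_le fun i => le_trans ((hf i).2) (hmono (le_iSup B i))
end

section
/- Let C be a bicomplete poset, W a subcategory satisfying strong 2-of-3, and χ a choice of centers. If f : A → B is a morphism such that the identity on B lies in J_χ (i.e., B → χ(B) exists in W), then f lifts on the left of every morphism in Q_χ. In particular J_χ ⧄ Q_χ. -/
/-!
We model a bicomplete skeletal poset as a complete lattice `α`, viewed as a category
with a (unique) morphism `a → b` iff `a ≤ b`.  Products are infima, coproducts are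
suprema, pushouts of `a → b` along `a → c` are `c → b ⊔ c`, pullbacks of `x → y`
along `z → y` are `x ⊓ z → z`.  A class of morphisms is a relation `α → α → Prop`.
-/

variable {α : Type*} [CompleteLattice α]

/-- If `f : A → B` is a morphism such that `1_B ∈ J_χ` (i.e. `B → χ B`
exists), then `f` lifts on the left of every morphism of `Q_χ`; in particular
`J_χ ⧄ Q_χ`. -/
theorem lifts_against_Qc (W : α → α → Prop) (χ : α → α)
    (hWle : ∀ a b : α, W a b → a ≤ b)
    (hWrefl : ∀ a : α, W a a)
    (hWtrans : ∀ a b c : α, W a b → W b c → W a c)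
    (hS : S2OF3 W) (hχ : IsCenters W χ) :
    (∀ A B : α, A ≤ B → Jc W χ B B →
      ∀ X Y : α, Qc W χ X Y → Lifts A B X Y) ∧
    (∀ A B X Y : α, Jc W χ A B → Qc W χ X Y → Lifts A B X Y) := by
  obtain ⟨hmono, hconst, -⟩ := hχ
  have key : ∀ B X Y : α, B ≤ χ B → W X Y → χ X ≤ X → B ≤ Y → B ≤ X := by
    intro B X Y hB hXY hX hBY
    calc B ≤ χ B := hB
      _ ≤ χ Y := hmono hBY
      _ = χ X := (hconst X Y hXY).symm
      _ ≤ X := hX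
  constructor
  · rintro A B _ ⟨-, hB⟩ X Y ⟨hXY, hX⟩ _ hBY
    exact key B X Y hB hXY hX hBY
  · rintro A B X Y ⟨-, hB⟩ ⟨hXY, hX⟩ _ hBY
    exact key B X Y hB hXY hX hBY
end

section
/- Let C be a bicomplete skeletal poset, W a subcategory satisfying strong 2-of-3, and χ a choice of centers. Then any morphism f : A → B in C with χ(A) = χ(B) belongs to W. -/
/-!
We model a bicomplete skeletal poset as a complete lattice `α`, viewed as a category
with a (unique) morphism `a → b` iff `a ≤ b`.  Products are infima, coproducts are
suprema, pushouts of `a → b` along `a → c` are `c → b ⊔ c`, pullbacks of `x → y`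
along `z → y` are `x ⊓ z → z`.  A class of morphisms is a relation `α → α → Prop`.
-/

variable {α : Type*} [CompleteLattice α]

/-- Any morphism `f : A → B` with `χ A = χ B` belongs to `W`. -/
theorem mem_W_of_center_eq (W : α → α → Prop) (χ : α → α)
    (hWle : ∀ a b : α, W a b → a ≤ b)
    (hWrefl : ∀ a : α, W a a)
    (hWtrans : ∀ a b c : α, W a b → W b c → W a c)
    (hS : S2OF3 W) (hχ : IsCenters W χ)
    (A B : α) (hAB : A ≤ B) (hcenter : χ A = χ B) :
    W A B := by
  obtain ⟨hmono, hid, hsq⟩ := hχ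
  have hA := hsq A
  have hB := hsq B
  -- χ A → B ⊔ χ B is in W
  have h1 : W (χ A) (B ⊔ χ B) := hcenter ▸ hB.2.2.2
  have hle1 : χ A ≤ A ⊔ χ A := le_sup_right
  have hle2 : A ⊔ χ A ≤ B ⊔ χ B := sup_le_sup hAB (hcenter ▸ le_rfl)
  have h2 : W (A ⊔ χ A) (B ⊔ χ B) := (hS _ _ _ hle1 hle2 h1).2
  have h3 : W A (B ⊔ χ B) := hWtrans _ _ _ hA.2.2.1 h2
  exact (hS _ _ _ hAB le_sup_left h3).1
end

section
/- Let C be a bicomplete skeletal poset and W a subcategory satisfying strong 2-of-3. If χ₁ and χ₂ are two choices of centers, then the pointwise product functor χ₁ × χ₂ is also a choice of centers. -/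
/-!
We model a bicomplete skeletal poset as a complete lattice `α`, viewed as a category
with a (unique) morphism `a → b` iff `a ≤ b`.  Products are infima, coproducts are
suprema, pushouts of `a → b` along `a → c` are `c → b ⊔ c`, pullbacks of `x → y`
along `z → y` are `x ⊓ z → z`.  A class of morphisms is a relation `α → α → Prop`.
-/

variable {α : Type*} [CompleteLattice α]

/-- If `χ₁` and `χ₂` are two choices of centers, then their pointwise
product `a ↦ χ₁ a ⊓ χ₂ a` is again a choice of centers. -/
theorem centers_product (W : α → α → Prop) (χ₁ χ₂ : α → α)
    (hWle : ∀ a b : α, W a b → a ≤ b)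
    (hWrefl : ∀ a : α, W a a)
    (hWtrans : ∀ a b c : α, W a b → W b c → W a c)
    (hS : S2OF3 W) (h₁ : IsCenters W χ₁) (h₂ : IsCenters W χ₂) :
    IsCenters W (fun a => χ₁ a ⊓ χ₂ a) := by
  obtain ⟨m₁, e₁, s₁⟩ := h₁
  obtain ⟨m₂, e₂, s₂⟩ := h₂
  refine ⟨fun x y hxy => inf_le_inf (m₁ hxy) (m₂ hxy),
    fun a b hab => by simp [e₁ a b hab, e₂ a b hab], fun a => ?_⟩
  set c₁ := χ₁ a with hc₁
  set c₂ := χ₂ a with hc₂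
  obtain ⟨w1, w2, w3, w4⟩ := s₁ a
  obtain ⟨v1, v2, v3, v4⟩ := s₂ a
  -- χ₂ (a ⊓ c₁) = c₂
  have hχ2 : χ₂ (a ⊓ c₁) = c₂ := e₂ _ _ w2
  obtain ⟨u1, u2, _, _⟩ := s₂ (a ⊓ c₁)
  rw [hχ2] at u1 u2
  -- u1 : W (a ⊓ c₁ ⊓ c₂) c₂, u2 : W (a ⊓ c₁ ⊓ c₂) (a ⊓ c₁)
  have hkey : a ⊓ c₁ ⊓ c₂ = a ⊓ (c₁ ⊓ c₂) := inf_assoc a c₁ c₂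
  rw [hkey] at u1 u2
  have hc : W (c₁ ⊓ c₂) c₂ :=
    (hS _ _ _ (inf_le_right : a ⊓ (c₁ ⊓ c₂) ≤ _) inf_le_right u1).2
  refine ⟨?_, hWtrans _ _ _ u2 w2, ?_, ?_⟩
  · exact (hS _ _ _ inf_le_right inf_le_right u1).1
  · exact (hS _ _ _ le_sup_left (sup_le_sup_left inf_le_left a) w3).1
  · have : W (c₁ ⊓ c₂) (a ⊔ c₂) := hWtrans _ _ _ hc v4
    exact (hS _ _ _ le_sup_right (sup_le_sup_left inf_le_right a) this).1
end

section
/- In any model structure on a poset category, the weak equivalences satisfy strong 2-of-3: if f = gh and f is a weak equivalence, then both g and h are weak equivalences. -/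
/-!
We model a bicomplete skeletal poset as a complete lattice `α`, viewed as a category
with a (unique) morphism `a → b` iff `a ≤ b`.  Products are infima, coproducts are
suprema, pushouts of `a → b` along `a → c` are `c → b ⊔ c`, pullbacks of `x → y`
along `z → y` are `x ⊓ z → z`.  A class of morphisms is a relation `α → α → Prop`.
-/

variable {α : Type*} [CompleteLattice α]

/-- A model structure on the poset `α`: three classes of morphisms (weak equivalences,
cofibrations, fibrations), each a class of genuine morphisms (`≤`), with identities
among the weak equivalences, 2-of-3, and the two weak factorization systems
(cofibrations, acyclic fibrations) and (acyclic cofibrations, fibrations):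
mutual lifting, maximality of both classes with respect to lifting, and factorizations. -/
structure ModelStr (α : Type*) [CompleteLattice α] where
  We : α → α → Prop
  Cof : α → α → Prop
  Fib : α → α → Prop
  we_le : ∀ a b : α, We a b → a ≤ b
  cof_le : ∀ a b : α, Cof a b → a ≤ b
  fib_le : ∀ a b : α, Fib a b → a ≤ b
  we_refl : ∀ a : α, We a a
  two_of_three₁ : ∀ a b c : α, a ≤ b → b ≤ c → We a b → We b c → We a c
  two_of_three₂ : ∀ a b c : α, a ≤ b → b ≤ c → We a b → We a c → We b c
  two_of_three₃ : ∀ a b c : α, a ≤ b → b ≤ c → We b c → We a c → We a b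
  lift₁ : ∀ a b x y : α, Cof a b → Fib x y → We x y → Lifts a b x y
  lift₂ : ∀ a b x y : α, Cof a b → We a b → Fib x y → Lifts a b x y
  max₁L : ∀ a b : α, a ≤ b → (∀ x y : α, Fib x y → We x y → Lifts a b x y) → Cof a b
  max₁R : ∀ x y : α, x ≤ y → (∀ a b : α, Cof a b → Lifts a b x y) → Fib x y ∧ We x y
  max₂L : ∀ a b : α, a ≤ b → (∀ x y : α, Fib x y → Lifts a b x y) → Cof a b ∧ We a b
  max₂R : ∀ x y : α, x ≤ y → (∀ a b : α, Cof a b → We a b → Lifts a b x y) → Fib x y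
  fact₁ : ∀ a b : α, a ≤ b → ∃ m : α, Cof a m ∧ Fib m b ∧ We m b
  fact₂ : ∀ a b : α, a ≤ b → ∃ m : α, Cof a m ∧ We a m ∧ Fib m b

/-- In any model structure on a poset, the weak equivalences satisfy
strong 2-of-3: if `f = g ∘ h` (i.e. `a ≤ b ≤ c`) and `f : a → c` is a weak equivalence,
then so are both `h : a → b` and `g : b → c`. -/
theorem strong_two_of_three (M : ModelStr α) :
    ∀ a b c : α, a ≤ b → b ≤ c → M.We a c → M.We a b ∧ M.We b c := by
  intro a b c hab hbc hac
  obtain ⟨m, hcof, hwe_am, hfib⟩ := M.fact₂ a c (hab.trans hbc)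
  have ham : a ≤ m := M.we_le _ _ hwe_am
  have hmc : m ≤ c := M.fib_le _ _ hfib
  have hwe_mc : M.We m c := M.two_of_three₂ a m c ham hmc hwe_am hac
  have habm : a ≤ b ⊓ m := le_inf hab ham
  -- b ⊓ m → b is an acyclic fibration (pullback of the acyclic fibration m → c)
  have h1 : M.Fib (b ⊓ m) b ∧ M.We (b ⊓ m) b := by
    refine M.max₁R _ _ inf_le_left ?_
    intro u v hcuv hux hvb
    exact le_inf hvb
      (M.lift₁ u v m c hcuv hfib hwe_mc (hux.trans inf_le_right) (hvb.trans hbc))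
  -- b ⊓ m → m is an acyclic cofibration (pushout of the acyclic cofibration a → m)
  have h2 : M.Cof (b ⊓ m) m ∧ M.We (b ⊓ m) m := by
    refine M.max₂L _ _ inf_le_right ?_
    intro x y hfxy hx hy
    exact M.lift₂ a m x y hcof hwe_am hfxy (habm.trans hx) hy
  have hwe_bmc : M.We (b ⊓ m) c :=
    M.two_of_three₁ (b ⊓ m) m c inf_le_right hmc h2.2 hwe_mc
  have hwe_bc : M.We b c :=
    M.two_of_three₂ (b ⊓ m) b c inf_le_left hbc h1.2 hwe_bmc
  exact ⟨M.two_of_three₃ a b c hab hbc hwe_bc hac, hwe_bc⟩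
end

section
/- Let C be a poset with model structure, B a cofibrant object, and f : A → B any morphism. Then f is a cofibration. Dually, any morphism out of a fibrant object is a fibration. -/
/-!
We model a bicomplete skeletal poset as a complete lattice `α`, viewed as a category
with a (unique) morphism `a → b` iff `a ≤ b`.  Products are infima, coproducts are
suprema, pushouts of `a → b` along `a → c` are `c → b ⊔ c`, pullbacks of `x → y`
along `z → y` are `x ⊓ z → z`.  A class of morphisms is a relation `α → α → Prop`.
-/

variable {α : Type*} [CompleteLattice α]

/-- Any morphism into a cofibrant object is a cofibration; dually, any
morphism out of a fibrant object is a fibration. -/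
theorem cofib_into_cofibrant (M : ModelStr α) :
    (∀ A B : α, M.Cof ⊥ B → A ≤ B → M.Cof A B) ∧
    (∀ A B : α, M.Fib A ⊤ → A ≤ B → M.Fib A B) := by
  constructor
  · intro A B hB hAB
    exact M.max₁L A B hAB fun x y hf hw _ hby => M.lift₁ ⊥ B x y hB hf hw bot_le hby
  · intro A B hA hAB
    exact M.max₂R A B hAB fun a b hc hw ha _ =>
      M.lift₂ a b A ⊤ hc hw hA ha le_top
end

section
/- Every model structure on a bicomplete skeletal poset C determines a choice of centers: each weak equivalence class contains a unique fibrant-cofibrant object χ(A), and the assignment A ↦ χ(A) defines a functor satisfying the center axioms. -/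
/-!
We model a bicomplete skeletal poset as a complete lattice `α`, viewed as a category
with a (unique) morphism `a → b` iff `a ≤ b`.  Products are infima, coproducts are
suprema, pushouts of `a → b` along `a → c` are `c → b ⊔ c`, pullbacks of `x → y`
along `z → y` are `x ⊓ z → z`.  A class of morphisms is a relation `α → α → Prop`.
-/

variable {α : Type*} [CompleteLattice α]

namespace CentersAux

variable {α : Type*} [CompleteLattice α] (M : ModelStr α)

noncomputable def cRep (a : α) : α := (M.fact₁ ⊥ a bot_le).choose

lemma cRep_spec (a : α) :
    M.Cof ⊥ (cRep M a) ∧ M.Fib (cRep M a) a ∧ M.We (cRep M a) a :=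
  (M.fact₁ ⊥ a bot_le).choose_spec

noncomputable def fRep (a : α) : α := (M.fact₂ a ⊤ le_top).choose

lemma fRep_spec (a : α) :
    M.Cof a (fRep M a) ∧ M.We a (fRep M a) ∧ M.Fib (fRep M a) ⊤ :=
  (M.fact₂ a ⊤ le_top).choose_spec

noncomputable def chi (a : α) : α := fRep M (cRep M a)

lemma cof_comp {a b c : α} (h1 : M.Cof a b) (h2 : M.Cof b c) : M.Cof a c := by
  refine M.max₁L a c ((M.cof_le a b h1).trans (M.cof_le b c h2)) ?_
  intro x y hf hw ha hc
  exact M.lift₁ b c x y h2 hf hw (M.lift₁ a b x y h1 hf hw ha ((M.cof_le b c h2).trans hc)) hc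

lemma chi_cof (a : α) : M.Cof ⊥ (chi M a) :=
  cof_comp M (cRep_spec M a).1 (fRep_spec M (cRep M a)).1

lemma chi_fib (a : α) : M.Fib (chi M a) ⊤ := (fRep_spec M (cRep M a)).2.2

lemma we_cRep (a : α) : M.We (cRep M a) a := (cRep_spec M a).2.2

lemma we_cRep_chi (a : α) : M.We (cRep M a) (chi M a) := (fRep_spec M (cRep M a)).2.1

/-- A fibrant object weakly equivalent below a cofibrant object is equal to it. -/
lemma bifib_eq {x y : α} (hx : M.Fib x ⊤) (hy : M.Cof ⊥ y) (hw : M.We x y) : x = y := by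
  have hxy : x ≤ y := M.we_le x y hw
  obtain ⟨m, cm, fm, wm⟩ := M.fact₁ x y hxy
  have wxm : M.We x m := M.two_of_three₃ x m y (M.cof_le x m cm) (M.fib_le m y fm) wm hw
  have hmx : m ≤ x := M.lift₂ x m x ⊤ cm wxm hx le_rfl le_top
  have hyx : y ≤ m := M.lift₁ ⊥ y m y hy fm wm bot_le le_rfl
  exact le_antisymm hxy (hyx.trans hmx)

lemma chi_mono : Monotone (chi M) := by
  intro a b h
  have h1 : cRep M a ≤ cRep M b :=
    M.lift₁ ⊥ (cRep M a) (cRep M b) b (cRep_spec M a).1 (cRep_spec M b).2.1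
      (we_cRep M b) bot_le ((M.we_le _ _ (we_cRep M a)).trans h)
  exact M.lift₂ (cRep M a) (chi M a) (chi M b) ⊤ (fRep_spec M (cRep M a)).1
    (we_cRep_chi M a) (chi_fib M b)
    (h1.trans (M.we_le _ _ (we_cRep_chi M b))) le_top

lemma chi_we {a b : α} (h : M.We a b) : chi M a = chi M b := by
  set ca := cRep M a with hca
  set cb := cRep M b with hcb
  have wcab : M.We ca b :=
    M.two_of_three₁ ca a b (M.we_le _ _ (we_cRep M a)) (M.we_le _ _ h) (we_cRep M a) h
  have hcacb : ca ≤ cb :=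
    M.lift₁ ⊥ ca cb b (cRep_spec M a).1 (cRep_spec M b).2.1 (we_cRep M b)
      bot_le (M.we_le _ _ wcab)
  have wcc : M.We ca cb :=
    M.two_of_three₃ ca cb b hcacb (M.we_le _ _ (we_cRep M b)) (we_cRep M b) wcab
  have wcafb : M.We ca (chi M b) :=
    M.two_of_three₁ ca cb (chi M b) hcacb (M.we_le _ _ (we_cRep_chi M b)) wcc (we_cRep_chi M b)
  have hfafb : chi M a ≤ chi M b :=
    M.lift₂ ca (chi M a) (chi M b) ⊤ (fRep_spec M ca).1 (we_cRep_chi M a) (chi_fib M b)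
      (M.we_le _ _ wcafb) le_top
  have wff : M.We (chi M a) (chi M b) :=
    M.two_of_three₂ ca (chi M a) (chi M b) (M.we_le _ _ (we_cRep_chi M a)) hfafb
      (we_cRep_chi M a) wcafb
  exact bifib_eq M (chi_fib M a) (chi_cof M b) wff

lemma chi_eqvGen {a b : α} (h : Relation.EqvGen M.We a b) : chi M a = chi M b := by
  induction h with
  | rel x y h => exact chi_we M h
  | refl x => rfl
  | symm x y _ ih => exact ih.symm
  | trans x y z _ _ ih1 ih2 => exact ih1.trans ih2

lemma chi_bifib {b : α} (hc : M.Cof ⊥ b) (hf : M.Fib b ⊤) : chi M b = b := by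
  have h1 : b ≤ cRep M b :=
    M.lift₁ ⊥ b (cRep M b) b hc (cRep_spec M b).2.1 (we_cRep M b) bot_le le_rfl
  have h2 : cRep M b = b := le_antisymm (M.we_le _ _ (we_cRep M b)) h1
  have h3 : fRep M b ≤ b :=
    M.lift₂ b (fRep M b) b ⊤ (fRep_spec M b).1 (fRep_spec M b).2.1 hf le_rfl le_top
  have h4 : fRep M b = b := le_antisymm h3 (M.we_le _ _ (fRep_spec M b).2.1)
  show fRep M (cRep M b) = b
  rw [h2, h4]

lemma chi_centers (a : α) :
    M.We (a ⊓ chi M a) (chi M a) ∧ M.We (a ⊓ chi M a) a ∧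
      M.We a (a ⊔ chi M a) ∧ M.We (chi M a) (a ⊔ chi M a) := by
  set x := chi M a with hx
  set ca := cRep M a with hca
  have hcaa : ca ≤ a := M.we_le _ _ (we_cRep M a)
  have hcax : ca ≤ x := M.we_le _ _ (we_cRep_chi M a)
  have hcam : ca ≤ a ⊓ x := le_inf hcaa hcax
  -- pullback of the acyclic fibration ca → a along a ⊓ x → a
  have hpull : M.Fib ca (a ⊓ x) ∧ M.We ca (a ⊓ x) := by
    refine M.max₁R ca (a ⊓ x) hcam ?_
    intro u v hc hu hv
    exact M.lift₁ u v ca a hc (cRep_spec M a).2.1 (we_cRep M a) hu (hv.trans inf_le_left)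
  have w1 : M.We (a ⊓ x) a :=
    M.two_of_three₂ ca (a ⊓ x) a hcam inf_le_left hpull.2 (we_cRep M a)
  have w2 : M.We (a ⊓ x) x :=
    M.two_of_three₂ ca (a ⊓ x) x hcam inf_le_right hpull.2 (we_cRep_chi M a)
  -- pushout of the acyclic cofibration ca → x along ca → a
  have hpush : M.Cof a (a ⊔ x) ∧ M.We a (a ⊔ x) := by
    refine M.max₂L a (a ⊔ x) le_sup_left ?_
    intro p q hf hp hq
    exact sup_le hp
      (M.lift₂ ca x p q (fRep_spec M ca).1 (we_cRep_chi M a) hf (hcaa.trans hp)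
        (le_sup_right.trans hq))
  have wcs : M.We ca (a ⊔ x) :=
    M.two_of_three₁ ca a (a ⊔ x) hcaa le_sup_left (we_cRep M a) hpush.2
  have w4 : M.We x (a ⊔ x) :=
    M.two_of_three₂ ca x (a ⊔ x) hcax le_sup_right (we_cRep_chi M a) wcs
  exact ⟨w2, w1, hpush.2, w4⟩

end CentersAux

/-- Every model structure on a bicomplete skeletal poset determines a
choice of centers: each weak equivalence class (zigzag-connected component of the weak
equivalences) contains a unique cofibrant-fibrant object `χ a`, and `a ↦ χ a` is a
functor satisfying the center axioms. -/

theorem modelStr_gives_centers (M : ModelStr α) :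
    ∃ χ : α → α, IsCenters M.We χ ∧
      ∀ a : α, M.Cof ⊥ (χ a) ∧ M.Fib (χ a) ⊤ ∧ Relation.EqvGen M.We a (χ a) ∧
        (∀ b : α, M.Cof ⊥ b → M.Fib b ⊤ → Relation.EqvGen M.We a b → b = χ a) := by
  classical
  refine ⟨CentersAux.chi M, ⟨CentersAux.chi_mono M,
    fun a b h => CentersAux.chi_we M h, CentersAux.chi_centers M⟩, fun a => ?_⟩
  refine ⟨CentersAux.chi_cof M a, CentersAux.chi_fib M a, ?_, ?_⟩
  · exact Relation.EqvGen.trans a (CentersAux.cRep M a) (CentersAux.chi M a)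
      (Relation.EqvGen.symm _ _ (Relation.EqvGen.rel _ _ (CentersAux.we_cRep M a)))
      (Relation.EqvGen.rel _ _ (CentersAux.we_cRep_chi M a))
  · intro b hc hf he
    have := CentersAux.chi_eqvGen M he
    rw [this, CentersAux.chi_bifib M hc hf]
end

section
/- In a model structure on a poset, factorizations of a morphism into an acyclic cofibration followed by a fibration (or a cofibration followed by an acyclic fibration) are unique. -/
/-!
We model a bicomplete skeletal poset as a complete lattice `α`, viewed as a category
with a (unique) morphism `a → b` iff `a ≤ b`.  Products are infima, coproducts are
suprema, pushouts of `a → b` along `a → c` are `c → b ⊔ c`, pullbacks of `x → y`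
along `z → y` are `x ⊓ z → z`.  A class of morphisms is a relation `α → α → Prop`.
-/

variable {α : Type*} [CompleteLattice α]

/-- In a model structure on a poset, factorizations into an acyclic
cofibration followed by a fibration, or a cofibration followed by an acyclic fibration,
are unique (the intermediate objects coincide). -/
theorem factorizations_unique (M : ModelStr α) :
    (∀ a b m₁ m₂ : α,
      M.Cof a m₁ → M.We a m₁ → M.Fib m₁ b →
      M.Cof a m₂ → M.We a m₂ → M.Fib m₂ b → m₁ = m₂) ∧
    (∀ a b m₁ m₂ : α,
      M.Cof a m₁ → M.Fib m₁ b → M.We m₁ b →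
      M.Cof a m₂ → M.Fib m₂ b → M.We m₂ b → m₁ = m₂) := by
  constructor
  · intro a b m₁ m₂ c₁ w₁ f₁ c₂ w₂ f₂
    exact le_antisymm
      (M.lift₂ a m₁ m₂ b c₁ w₁ f₂ (M.cof_le _ _ c₂) (M.fib_le _ _ f₁))
      (M.lift₂ a m₂ m₁ b c₂ w₂ f₁ (M.cof_le _ _ c₁) (M.fib_le _ _ f₂))
  · intro a b m₁ m₂ c₁ f₁ w₁ c₂ f₂ w₂
    exact le_antisymm
      (M.lift₁ a m₁ m₂ b c₁ f₂ w₂ (M.cof_le _ _ c₂) (M.fib_le _ _ f₁))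
      (M.lift₁ a m₂ m₁ b c₂ f₁ w₁ (M.cof_le _ _ c₁) (M.fib_le _ _ f₂))
end

section
/- Let C be a bicomplete skeletal poset, W a subcategory satisfying strong 2-of-3, and χ a choice of centers. Then J_χ ⊆ W_c^χ and Q_χ ⊆ W_f^χ. -/
/-!
We model a bicomplete skeletal poset as a complete lattice `α`, viewed as a category
with a (unique) morphism `a → b` iff `a ≤ b`.  Products are infima, coproducts are
suprema, pushouts of `a → b` along `a → c` are `c → b ⊔ c`, pullbacks of `x → y`
along `z → y` are `x ⊓ z → z`.  A class of morphisms is a relation `α → α → Prop`.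
-/

variable {α : Type*} [CompleteLattice α]

/-- `W_c^χ`: morphisms `a → b` of `W` all of whose non-identity pushouts
`c → b ⊔ c` are in `W` but not in `Q_χ`. -/
def Wc (W : α → α → Prop) (χ : α → α) (a b : α) : Prop :=
  W a b ∧ ∀ c : α, a ≤ c → b ⊔ c ≠ c → (W c (b ⊔ c) ∧ ¬ Qc W χ c (b ⊔ c))

/-- `W_f^χ`: morphisms `x → y` of `W` all of whose non-identity pullbacks
`x ⊓ z → z` are in `W` but not in `J_χ`. -/
def Wf (W : α → α → Prop) (χ : α → α) (x y : α) : Prop :=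
  W x y ∧ ∀ z : α, z ≤ y → x ⊓ z ≠ z → (W (x ⊓ z) z ∧ ¬ Jc W χ (x ⊓ z) z)

/-- `J_χ ⊆ W_c^χ` and `Q_χ ⊆ W_f^χ`. -/
theorem Jc_subset_Wc (W : α → α → Prop) (χ : α → α)
    (hWle : ∀ a b : α, W a b → a ≤ b)
    (hWrefl : ∀ a : α, W a a)
    (hWtrans : ∀ a b c : α, W a b → W b c → W a c)
    (hS : S2OF3 W) (hχ : IsCenters W χ) :
    (∀ a b : α, Jc W χ a b → Wc W χ a b) ∧
    (∀ a b : α, Qc W χ a b → Wf W χ a b) := by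
  obtain ⟨hmono, hconst, hsq⟩ := hχ
  constructor
  · rintro a b ⟨hW, hbχ⟩
    refine ⟨hW, fun c hac hne => ?_⟩
    have hbc : b ≤ χ c := le_trans hbχ (by rw [← hconst a b hW]; exact hmono hac)
    have h1 : W c (b ⊔ c) := by
      have := (hS c (b ⊔ c) (c ⊔ χ c) le_sup_right
        (sup_le (le_trans hbc le_sup_right) le_sup_left) (hsq c).2.2.1).1
      exact this
    refine ⟨h1, fun ⟨_, hχc⟩ => hne (sup_eq_right.2 (le_trans hbc hχc))⟩
  · rintro a b ⟨hW, hχa⟩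
    refine ⟨hW, fun z hzb hne => ?_⟩
    have hχz : χ z ≤ a := le_trans (by rw [hconst a b hW]; exact hmono hzb) hχa
    have h1 : W (a ⊓ z) z := by
      have := (hS (z ⊓ χ z) (a ⊓ z) z
        (le_inf (le_trans inf_le_right hχz) inf_le_left) inf_le_right (hsq z).2.1).2
      exact this
    refine ⟨h1, fun ⟨_, hzχ⟩ => hne (inf_eq_right.2 (le_trans hzχ hχz))⟩
end

section
/- Let C be a bicomplete skeletal poset, W a subcategory satisfying strong 2-of-3, and χ a choice of centers. Then every morphism f : X → Y in W factors as X → Y × (X ∪ χ(X)) → Y, where the first morphism lies in W_c^χ and the second lies in W_f^χ and lifts on the right of every morphism in W_c^χ. -/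
/-!
We model a bicomplete skeletal poset as a complete lattice `α`, viewed as a category
with a (unique) morphism `a → b` iff `a ≤ b`.  Products are infima, coproducts are
suprema, pushouts of `a → b` along `a → c` are `c → b ⊔ c`, pullbacks of `x → y`
along `z → y` are `x ⊓ z → z`.  A class of morphisms is a relation `α → α → Prop`.
-/

variable {α : Type*} [CompleteLattice α]

/-- Every morphism `f : X → Y` in `W` factors as
`X → Y ⊓ (X ⊔ χ X) → Y`, where the first morphism lies in `W_c^χ` and the second lies
in `W_f^χ` and lifts on the right of every morphism of `W_c^χ`. -/
theorem factorization_through_center (W : α → α → Prop) (χ : α → α)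
    (hWle : ∀ a b : α, W a b → a ≤ b)
    (hWrefl : ∀ a : α, W a a)
    (hWtrans : ∀ a b c : α, W a b → W b c → W a c)
    (hS : S2OF3 W) (hχ : IsCenters W χ)
    (X Y : α) (hf : W X Y) :
    Wc W χ X (Y ⊓ (X ⊔ χ X)) ∧ Wf W χ (Y ⊓ (X ⊔ χ X)) Y ∧
      (∀ a b : α, Wc W χ a b → Lifts a b (Y ⊓ (X ⊔ χ X)) Y) := by
  obtain ⟨hmono, hχeq, hsq⟩ := hχ
  have hXY : X ≤ Y := hWle _ _ hf
  set M := Y ⊓ (X ⊔ χ X) with hM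
  have hXM : X ≤ M := le_inf hXY le_sup_left
  have hMY : M ≤ Y := inf_le_left
  obtain ⟨hWXM, hWMY⟩ := hS X M Y hXM hMY hf
  have hχXM : χ X = χ M := hχeq _ _ hWXM
  have hχXY : χ X = χ Y := hχeq _ _ hf
  refine ⟨⟨hWXM, ?_⟩, ⟨hWMY, ?_⟩, ?_⟩
  · intro c hXc hne
    have h1 : M ⊔ c ≤ c ⊔ χ c := by
      apply sup_le _ le_sup_left
      exact inf_le_right.trans (sup_le (hXc.trans le_sup_left)
        ((hmono hXc).trans le_sup_right))
    have hWc : W c (M ⊔ c) := (hS c (M ⊔ c) (c ⊔ χ c) le_sup_right h1 (hsq c).2.2.1).1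
    refine ⟨hWc, ?_⟩
    rintro ⟨-, hle⟩
    exact hne (sup_eq_right.mpr ((le_sup_left.trans h1).trans (sup_le le_rfl hle)))
  · intro z hz hne
    have h2 : z ⊓ χ z ≤ M ⊓ z := by
      refine le_inf (le_inf (inf_le_left.trans hz) ?_) inf_le_left
      exact inf_le_right.trans (((hmono hz).trans (hχXY ▸ le_rfl)).trans le_sup_right)
    have hWz : W (M ⊓ z) z := (hS (z ⊓ χ z) (M ⊓ z) z h2 inf_le_right (hsq z).2.1).2
    refine ⟨hWz, ?_⟩
    rintro ⟨-, hle⟩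
    have : z ≤ M ⊓ z := (inf_eq_left.mpr hle).symm.le.trans h2
    exact hne (le_antisymm inf_le_right this)
  · rintro a b ⟨hWab, hcond⟩ haM hbY
    have hWMc : W M (M ⊔ χ M) := (hsq M).2.2.1
    have hχc : χ (M ⊔ χ M) ≤ M ⊔ χ M := (hχeq _ _ hWMc) ▸ le_sup_right
    have hb : b ≤ M ⊔ χ M := by
      by_contra hnle
      obtain ⟨hW', hQ⟩ := hcond (M ⊔ χ M) (haM.trans le_sup_left)
        (fun h => hnle (sup_eq_right.mp h))
      exact hQ ⟨hW', hχc⟩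
    refine le_inf hbY (hb.trans (sup_le inf_le_right ?_))
    exact (hχXM ▸ le_sup_right : χ M ≤ X ⊔ χ X)
end

section
/- Let C be a bicomplete skeletal poset and W a subcategory. A model structure on C with weak equivalences W exists if and only if W satisfies strong 2-of-3 and there exists a choice of centers for (C, W). -/
/-!
We model a bicomplete skeletal poset as a complete lattice `α`, viewed as a category
with a (unique) morphism `a → b` iff `a ≤ b`.  Products are infima, coproducts are
suprema, pushouts of `a → b` along `a → c` are `c → b ⊔ c`, pullbacks of `x → y`
along `z → y` are `x ⊓ z → z`.  A class of morphisms is a relation `α → α → Prop`.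
-/

variable {α : Type*} [CompleteLattice α]

/-- In any model structure on a poset, the weak equivalences satisfy strong 2-of-3. -/
lemma modelS2OF3 (M : ModelStr α) : S2OF3 M.We := by
  intro a b c hab hbc hac
  obtain ⟨n, hcof, hwe, hfib⟩ := M.fact₂ a c (hab.trans hbc)
  have han : a ≤ n := M.we_le _ _ hwe
  have hnc : n ≤ c := M.fib_le _ _ hfib
  have hwnc : M.We n c := M.two_of_three₂ a n c han hnc hwe hac
  -- `b → b ⊔ n` is an acyclic cofibration (pushout of `a → n`)
  have h1 : M.Cof b (b ⊔ n) ∧ M.We b (b ⊔ n) :=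
    M.max₂L _ _ le_sup_left (fun x y hf hbx hsy =>
      sup_le hbx (M.lift₂ a n x y hcof hwe hf (hab.trans hbx) (le_sup_right.trans hsy)))
  -- `b ⊓ n → n` is an acyclic cofibration (pushout of `a → n`)
  have h2 : M.Cof (b ⊓ n) n ∧ M.We (b ⊓ n) n :=
    M.max₂L _ _ inf_le_right (fun x y hf hix hny =>
      M.lift₂ a n x y hcof hwe hf ((le_inf hab han).trans hix) hny)
  -- `b ⊓ n → b` is an acyclic fibration (pullback of `n → c`)
  have h3 : M.Fib (b ⊓ n) b ∧ M.We (b ⊓ n) b :=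
    M.max₁R _ _ inf_le_left (fun s t hc hs ht =>
      le_inf ht (M.lift₁ s t n c hc hfib hwnc (hs.trans inf_le_right) (ht.trans hbc)))
  -- `n → b ⊔ n` is an acyclic fibration (pullback of `n → c`)
  have h4 : M.Fib n (b ⊔ n) ∧ M.We n (b ⊔ n) :=
    M.max₁R _ _ le_sup_right (fun s t hc hs ht =>
      M.lift₁ s t n c hc hfib hwnc hs (ht.trans (sup_le hbc hnc)))
  have hai : M.We a (b ⊓ n) :=
    M.two_of_three₃ a (b ⊓ n) n (le_inf hab han) inf_le_right h2.2 hwe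
  have h5 : M.We a b := M.two_of_three₁ a (b ⊓ n) b (le_inf hab han) inf_le_left hai h3.2
  have h6 : M.We (b ⊔ n) c :=
    M.two_of_three₂ n (b ⊔ n) c le_sup_right (sup_le hbc hnc) h4.2 hwnc
  exact ⟨h5, M.two_of_three₁ b (b ⊔ n) c le_sup_left (sup_le hbc hnc) h1.2 h6⟩

/-- In any model structure on a poset, a choice of centers exists
(fibrant replacement of a cofibrant replacement). -/
lemma modelCenters (M : ModelStr α) : ∃ χ : α → α, IsCenters M.We χ := by
  classical
  have hs2 := modelS2OF3 M
  choose c hc1 hc2 hc3 using fun a : α => M.fact₁ ⊥ a bot_le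
  choose χ hχ1 hχ2 hχ3 using fun a : α => M.fact₂ (c a) ⊤ le_top
  have hca : ∀ a, c a ≤ a := fun a => M.fib_le _ _ (hc2 a)
  have hcχ : ∀ a, c a ≤ χ a := fun a => M.we_le _ _ (hχ2 a)
  -- each χ a is cofibrant
  have hcofχ : ∀ a, M.Cof ⊥ (χ a) := fun a =>
    M.max₁L _ _ bot_le (fun x y hf hw _ hχy =>
      M.lift₂ (c a) (χ a) x y (hχ1 a) (hχ2 a) hf
        (M.lift₁ ⊥ (c a) x y (hc1 a) hf hw bot_le ((hcχ a).trans hχy)) hχy)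
  -- two fibrant-cofibrant objects connected by a span of weak equivalences are comparable
  have span : ∀ w u v : α, M.Cof ⊥ u → M.Fib u ⊤ → M.Cof ⊥ v → M.Fib v ⊤ →
      M.We w u → M.We w v → v ≤ u := by
    intro w u v hcu hfu hcv hfv hwu hwv
    obtain ⟨p, hp1, hp2, hp3⟩ := M.fact₂ w v (M.we_le _ _ hwv)
    have hpv : M.We p v :=
      M.two_of_three₂ w p v (M.we_le _ _ hp2) (M.fib_le _ _ hp3) hp2 hwv
    have hvp : v ≤ p := M.lift₁ ⊥ v p v hcv hp3 hpv bot_le le_rfl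
    have hpev : p = v := le_antisymm (M.fib_le _ _ hp3) hvp
    have hacwv : M.Cof w v := hpev ▸ hp1
    have hpo : M.Cof u (u ⊔ v) ∧ M.We u (u ⊔ v) :=
      M.max₂L _ _ le_sup_left (fun x y hf hux hsy =>
        sup_le hux (M.lift₂ w v x y hacwv hwv hf ((M.we_le _ _ hwu).trans hux)
          (le_sup_right.trans hsy)))
    exact le_sup_right.trans (M.lift₂ u (u ⊔ v) u ⊤ hpo.1 hpo.2 hfu le_rfl le_top)
  have hcmono : ∀ a b : α, a ≤ b → c a ≤ c b := fun a b hab =>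
    M.lift₁ ⊥ (c a) (c b) b (hc1 a) (hc2 b) (hc3 b) bot_le ((hca a).trans hab)
  have hχmono : Monotone χ := fun a b hab =>
    M.lift₂ (c a) (χ a) (χ b) ⊤ (hχ1 a) (hχ2 a) (hχ3 b)
      ((hcmono a b hab).trans (hcχ b)) le_top
  refine ⟨χ, hχmono, ?_, ?_⟩
  · -- W-invariance
    intro a b hab
    have hle : a ≤ b := M.we_le _ _ hab
    have hcab : M.We (c a) b :=
      M.two_of_three₁ (c a) a b (hca a) hle (hc3 a) hab
    have hcc : M.We (c a) (c b) :=
      (hs2 (c a) (c b) b (hcmono a b hle) (hca b) hcab).1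
    have hwb : M.We (c a) (χ b) :=
      M.two_of_three₁ (c a) (c b) (χ b) (hcmono a b hle) (hcχ b) hcc (hχ2 b)
    exact le_antisymm
      (span (c a) (χ b) (χ a) (hcofχ b) (hχ3 b) (hcofχ a) (hχ3 a) hwb (hχ2 a))
      (span (c a) (χ a) (χ b) (hcofχ a) (hχ3 a) (hcofχ b) (hχ3 b) (hχ2 a) hwb)
  · intro a
    have hle : c a ≤ a ⊓ χ a := le_inf (hca a) (hcχ a)
    have hW1 : M.We (a ⊓ χ a) (χ a) := (hs2 (c a) (a ⊓ χ a) (χ a) hle inf_le_right (hχ2 a)).2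
    have hW2 : M.We (a ⊓ χ a) a := (hs2 (c a) (a ⊓ χ a) a hle inf_le_left (hc3 a)).2
    -- `a → a ⊔ χ a` is a pushout of the acyclic cofibration `c a → χ a`
    have hW3 : M.We a (a ⊔ χ a) :=
      (M.max₂L a (a ⊔ χ a) le_sup_left (fun x y hf hax hsy =>
        sup_le hax (M.lift₂ (c a) (χ a) x y (hχ1 a) (hχ2 a) hf
          ((hca a).trans hax) (le_sup_right.trans hsy)))).2
    have hW4 : M.We (χ a) (a ⊔ χ a) := by
      have : M.We (c a) (a ⊔ χ a) :=
        M.two_of_three₁ (c a) a (a ⊔ χ a) (hca a) le_sup_left (hc3 a) hW3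
      exact (hs2 (c a) (χ a) (a ⊔ χ a) (hcχ a) le_sup_right this).2
    exact ⟨hW1, hW2, hW3, hW4⟩

/-- (Main theorem.)  For a subcategory `W` of a bicomplete skeletal
poset, a model structure with weak equivalences `W` exists iff `W` satisfies strong
2-of-3 and there exists a choice of centers. -/
theorem model_structure_exists_iff (W : α → α → Prop)
    (hWle : ∀ a b : α, W a b → a ≤ b)
    (hWrefl : ∀ a : α, W a a)
    (hWtrans : ∀ a b c : α, W a b → W b c → W a c) :
    (∃ M : ModelStr α, M.We = W) ↔ (S2OF3 W ∧ ∃ χ : α → α, IsCenters W χ) := by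
  constructor
  · rintro ⟨M, rfl⟩
    exact ⟨modelS2OF3 M, modelCenters M⟩
  · rintro ⟨hS, χ, hmono, hinv, hcent⟩
    have hχχ : ∀ a, χ (χ a) = χ a := fun a =>
      (hinv (χ a) (a ⊔ χ a) (hcent a).2.2.2).trans (hinv a (a ⊔ χ a) (hcent a).2.2.1).symm
    have hχinf : ∀ a, χ (a ⊓ χ a) = χ a := fun a =>
      (hinv _ _ (hcent a).1).trans (hχχ a)
    refine ⟨{
      We := W
      Cof := fun a b => a ≤ b ∧ b ≤ a ⊔ (b ⊓ χ b)
      Fib := fun x y => x ≤ y ∧ y ⊓ χ x ≤ x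
      we_le := hWle
      cof_le := fun a b h => h.1
      fib_le := fun a b h => h.1
      we_refl := hWrefl
      two_of_three₁ := fun a b c _ _ h1 h2 => hWtrans a b c h1 h2
      two_of_three₂ := fun a b c hab hbc _ hac => (hS a b c hab hbc hac).2
      two_of_three₃ := fun a b c hab hbc _ hac => (hS a b c hab hbc hac).1
      lift₁ := by
        intro a b x y hc hf hw hax hby
        have hχ : χ b ≤ χ x := (hmono hby).trans (hinv x y hw).ge
        exact hc.2.trans (sup_le hax ((inf_le_inf hby hχ).trans hf.2))
      lift₂ := by
        intro a b x y hc hw hf hax hby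
        have hχ : χ b ≤ χ x := (hinv a b hw).ge.trans (hmono hax)
        exact hc.2.trans (sup_le hax ((inf_le_inf hby hχ).trans hf.2))
      max₁L := by
        intro a b hab H
        have hmb : a ⊔ (b ⊓ χ b) ≤ b := sup_le hab inf_le_left
        have hχm : χ (a ⊔ (b ⊓ χ b)) = χ b :=
          le_antisymm (hmono hmb) ((hχinf b).ge.trans (hmono (le_sup_right : b ⊓ χ b ≤ a ⊔ (b ⊓ χ b))))
        have hWmb : W (a ⊔ (b ⊓ χ b)) b :=
          (hS _ _ b le_sup_right hmb (hcent b).2.1).2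
        have hba : b ≤ a ⊔ (b ⊓ χ b) :=
          H _ b ⟨hmb, by rw [hχm]; exact le_sup_right⟩ hWmb le_sup_left le_rfl
        exact ⟨hab, hba⟩
      max₁R := by
        intro x y hxy H
        have hby : x ⊔ (y ⊓ χ y) ≤ y := sup_le hxy inf_le_left
        have hχb : χ y ≤ χ (x ⊔ (y ⊓ χ y)) := (hχinf y).ge.trans (hmono (le_sup_right : y ⊓ χ y ≤ x ⊔ (y ⊓ χ y)))
        have hcof2 : x ⊔ (y ⊓ χ y) ≤ x ⊔ ((x ⊔ (y ⊓ χ y)) ⊓ χ (x ⊔ (y ⊓ χ y))) :=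
          sup_le le_sup_left
            ((le_inf le_sup_right (inf_le_right.trans hχb)).trans le_sup_right)
        have hbx : x ⊔ (y ⊓ χ y) ≤ x := H x _ ⟨le_sup_left, hcof2⟩ le_rfl hby
        have hyx : y ⊓ χ y ≤ x := le_sup_right.trans hbx
        have hW : W x y := (hS _ x y hyx hxy (hcent y).2.1).2
        exact ⟨⟨hxy, by rw [hinv x y hW]; exact hyx⟩, hW⟩
      max₂L := by
        intro a b hab H
        have hxb : a ⊔ (b ⊓ χ a) ≤ b := sup_le hab inf_le_left
        have hWax : W a (a ⊔ (b ⊓ χ a)) :=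
          (hS a _ (a ⊔ χ a) le_sup_left
            (sup_le le_sup_left (inf_le_right.trans le_sup_right)) (hcent a).2.2.1).1
        have hχx : χ (a ⊔ (b ⊓ χ a)) = χ a := (hinv a _ hWax).symm
        have hbx : b ≤ a ⊔ (b ⊓ χ a) :=
          H _ b ⟨hxb, by rw [hχx]; exact le_sup_right⟩ le_sup_left le_rfl
        have hbex : b = a ⊔ (b ⊓ χ a) := le_antisymm hbx hxb
        have hW : W a b := hbex ▸ hWax
        refine ⟨⟨hab, ?_⟩, hW⟩
        rw [← hinv a b hW]
        exact hbx
      max₂R := by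
        intro x y hxy H
        have hbχ : (x ⊓ χ x) ⊔ (y ⊓ χ x) ≤ χ x := sup_le inf_le_right inf_le_right
        have hW : W (x ⊓ χ x) ((x ⊓ χ x) ⊔ (y ⊓ χ x)) :=
          (hS _ _ (χ x) le_sup_left hbχ (hcent x).1).1
        have hχb : χ x ≤ χ ((x ⊓ χ x) ⊔ (y ⊓ χ x)) :=
          (hχinf x).ge.trans (hinv _ _ hW).le
        have hcof2 : (x ⊓ χ x) ⊔ (y ⊓ χ x) ≤
            (x ⊓ χ x) ⊔ (((x ⊓ χ x) ⊔ (y ⊓ χ x)) ⊓ χ ((x ⊓ χ x) ⊔ (y ⊓ χ x))) :=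
          (le_inf le_rfl (hbχ.trans hχb)).trans le_sup_right
        have hbx : (x ⊓ χ x) ⊔ (y ⊓ χ x) ≤ x :=
          H _ _ ⟨le_sup_left, hcof2⟩ hW inf_le_left
            (sup_le (inf_le_left.trans hxy) inf_le_left)
        exact ⟨hxy, le_sup_right.trans hbx⟩
      fact₁ := by
        intro a b hab
        refine ⟨a ⊔ (b ⊓ χ b), ⟨le_sup_left, ?_⟩, ⟨sup_le hab inf_le_left, ?_⟩, ?_⟩
        · have hχm : χ b ≤ χ (a ⊔ (b ⊓ χ b)) := (hχinf b).ge.trans (hmono (le_sup_right : b ⊓ χ b ≤ a ⊔ (b ⊓ χ b)))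
          exact sup_le le_sup_left
            ((le_inf le_sup_right (inf_le_right.trans hχm)).trans le_sup_right)
        · have hχm : χ (a ⊔ (b ⊓ χ b)) ≤ χ b := hmono (sup_le hab inf_le_left)
          exact (inf_le_inf le_rfl hχm).trans le_sup_right
        · exact (hS _ _ b le_sup_right (sup_le hab inf_le_left) (hcent b).2.1).2
      fact₂ := by
        intro a b hab
        have hWax : W a (a ⊔ (b ⊓ χ a)) :=
          (hS a _ (a ⊔ χ a) le_sup_left
            (sup_le le_sup_left (inf_le_right.trans le_sup_right)) (hcent a).2.2.1).1
        have hχm : χ (a ⊔ (b ⊓ χ a)) = χ a := (hinv a _ hWax).symm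
        refine ⟨a ⊔ (b ⊓ χ a), ⟨le_sup_left, ?_⟩, hWax,
          ⟨sup_le hab inf_le_left, by rw [hχm]; exact le_sup_right⟩⟩
        rw [hχm]
        exact sup_le le_sup_left
          ((le_inf le_sup_right inf_le_right).trans le_sup_right)
    }, rfl⟩
end

section
/- Let C be a small bicomplete poset with model structure, and let C^c be the full subcategory of cofibrant objects. Then C^c is bicomplete: it has all coproducts (computed as in C), and the product of a family {A_i} in C^c is given by the cofibrant replacement of the product in C. -/
/-!
We model a bicomplete skeletal poset as a complete lattice `α`, viewed as a category
with a (unique) morphism `a → b` iff `a ≤ b`.  Products are infima, coproducts are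
suprema, pushouts of `a → b` along `a → c` are `c → b ⊔ c`, pullbacks of `x → y`
along `z → y` are `x ⊓ z → z`.  A class of morphisms is a relation `α → α → Prop`.
-/

variable {α : Type*} [CompleteLattice α]

/-- The full subcategory `C^c` of cofibrant objects is bicomplete:
coproducts of cofibrant objects (computed as in `C`, i.e. suprema) are cofibrant, and
the product in `C^c` of a family of cofibrant objects is the cofibrant replacement of
their product (infimum) in `C`. -/
theorem cofibrant_subcategory_bicomplete (M : ModelStr α) :
    (∀ (ι : Type) (A : ι → α), (∀ i, M.Cof ⊥ (A i)) → M.Cof ⊥ (⨆ i, A i)) ∧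
    (∀ (ι : Type) (A : ι → α), (∀ i, M.Cof ⊥ (A i)) →
      ∃ p : α, M.Cof ⊥ p ∧ M.Fib p (⨅ i, A i) ∧ M.We p (⨅ i, A i) ∧
        ∀ d : α, M.Cof ⊥ d → ((∀ i, d ≤ A i) ↔ d ≤ p)) := by
  constructor
  · intro ι A hA
    apply M.max₁L _ _ bot_le
    intro x y hfib hwe hx hy
    exact iSup_le fun i => M.lift₁ ⊥ (A i) x y (hA i) hfib hwe bot_le
      ((le_iSup A i).trans hy)
  · intro ι A hA
    obtain ⟨p, hc, hf, hw⟩ := M.fact₁ ⊥ (⨅ i, A i) bot_le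
    refine ⟨p, hc, hf, hw, fun d hd => ⟨fun h => ?_, fun h i => ?_⟩⟩
    · exact M.lift₁ ⊥ d p (⨅ i, A i) hd hf hw bot_le (le_iInf h)
    · exact h.trans ((M.we_le _ _ hw).trans (iInf_le A i))
end

section
/- Let C be a poset with model structure in which every object is both cofibrant and fibrant. Then every weak equivalence is an isomorphism, every morphism is a cofibration, and every morphism is a fibration. -/
/-!
We model a bicomplete skeletal poset as a complete lattice `α`, viewed as a category
with a (unique) morphism `a → b` iff `a ≤ b`.  Products are infima, coproducts are
suprema, pushouts of `a → b` along `a → c` are `c → b ⊔ c`, pullbacks of `x → y`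
along `z → y` are `x ⊓ z → z`.  A class of morphisms is a relation `α → α → Prop`.
-/

variable {α : Type*} [CompleteLattice α]

/-- If every object of a poset model structure is both cofibrant and
fibrant, then every weak equivalence is an isomorphism (an identity, as the poset is
skeletal), and every morphism is both a cofibration and a fibration. -/
theorem all_cofibrant_fibrant (M : ModelStr α)
    (hc : ∀ a : α, M.Cof ⊥ a) (hfib : ∀ a : α, M.Fib a ⊤) :
    (∀ a b : α, M.We a b → a = b) ∧
    (∀ a b : α, a ≤ b → M.Cof a b ∧ M.Fib a b) := by
  have hcof : ∀ a b : α, a ≤ b → M.Cof a b := by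
    intro a b hab
    exact M.max₁L a b hab (fun x y hf hw ha hb =>
      M.lift₁ ⊥ b x y (hc b) hf hw bot_le hb)
  have hfib' : ∀ a b : α, a ≤ b → M.Fib a b := by
    intro a b hab
    exact M.max₂R a b hab (fun a' b' hco hw ha hb =>
      M.lift₂ a' b' a ⊤ hco hw (hfib a) ha le_top)
  refine ⟨fun a b hw => ?_, fun a b hab => ⟨hcof a b hab, hfib' a b hab⟩⟩
  have hab := M.we_le a b hw
  exact le_antisymm hab (M.lift₂ a b a b (hcof a b hab) hw (hfib' a b hab) le_rfl le_rfl)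
end

section
/- Let C be a bicomplete poset, with model structure C₁ given by (we, cof, fib) and define J = (cof ∩ we) ∪ J_χ where χ is the choice of centers associated to C₁. If every morphism f : X → Y that is a fibration in C₁ and satisfies 1_X ∈ Q_χ (i.e., χ(X) → X exists) is considered, then f lies in J^⧄. -/
/-!
We model a bicomplete skeletal poset as a complete lattice `α`, viewed as a category
with a (unique) morphism `a → b` iff `a ≤ b`.  Products are infima, coproducts are
suprema, pushouts of `a → b` along `a → c` are `c → b ⊔ c`, pullbacks of `x → y`
along `z → y` are `x ⊓ z → z`.  A class of morphisms is a relation `α → α → Prop`.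
-/

variable {α : Type*} [CompleteLattice α]

/-- Let `χ` be the choice of centers associated to a model structure
(sending each object to the unique cofibrant-fibrant object of its weak equivalence
class).  Every fibration `f : X → Y` with `1_X ∈ Q_χ` (i.e. `χ X → X` exists) lies in
`J^⧄` where `J = (Cof ∩ We) ∪ J_χ`. -/
theorem fib_in_new_fib (M : ModelStr α) (χ : α → α)
    (hχ : IsCenters M.We χ)
    (hcf : ∀ a : α, M.Cof ⊥ (χ a) ∧ M.Fib (χ a) ⊤ ∧ Relation.EqvGen M.We a (χ a))
    (X Y : α) (hfib : M.Fib X Y) (hQ : χ X ≤ X) :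
    ∀ a b : α, ((M.Cof a b ∧ M.We a b) ∨ Jc M.We χ a b) → Lifts a b X Y := by
  rintro a b (⟨hc, hw⟩ | ⟨hw, hb⟩)
  · exact M.lift₂ a b X Y hc hw hfib
  · intro haX _
    calc b ≤ χ b := hb
      _ = χ a := (hχ.2.1 a b hw).symm
      _ ≤ χ X := hχ.1 haX
      _ ≤ X := hQ
end

section
/- Let C be a bicomplete skeletal poset with model structure and let A, A' be two cofibrant-fibrant objects in the same weak equivalence class. Then A = A'. -/
/-!
We model a bicomplete skeletal poset as a complete lattice `α`, viewed as a category
with a (unique) morphism `a → b` iff `a ≤ b`.  Products are infima, coproducts are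
suprema, pushouts of `a → b` along `a → c` are `c → b ⊔ c`, pullbacks of `x → y`
along `z → y` are `x ⊓ z → z`.  A class of morphisms is a relation `α → α → Prop`.
-/

variable {α : Type*} [CompleteLattice α]

/-- Invariant: `a` admits a fibrant replacement `r` receiving `A` by a weak equivalence. -/
private def PInv (M : ModelStr α) (A a : α) : Prop :=
  ∃ r, M.We a r ∧ M.Fib r ⊤ ∧ A ≤ r ∧ M.We A r

private theorem pinv_upgrade (M : ModelStr α) {A a : α} (hAc : M.Cof ⊥ A)
    (h : PInv M A a) :
    ∃ m, M.Cof a m ∧ M.We a m ∧ M.Fib m ⊤ ∧ A ≤ m ∧ M.We A m := by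
  obtain ⟨r, har, hrf, hAr, hwAr⟩ := h
  have har_le : a ≤ r := M.we_le _ _ har
  obtain ⟨m, hcam, hwam, hfmr⟩ := M.fact₂ a r har_le
  have hmr : m ≤ r := M.fib_le _ _ hfmr
  have hfm : M.Fib m ⊤ := by
    refine M.max₂R m ⊤ le_top (fun c d hcd hwcd hcm _ => ?_)
    have hdr : d ≤ r := M.lift₂ c d r ⊤ hcd hwcd hrf (hcm.trans hmr) le_top
    exact M.lift₂ c d m r hcd hwcd hfmr hcm hdr
  have hwmr : M.We m r := M.two_of_three₂ a m r (M.cof_le _ _ hcam) hmr hwam har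
  have hAm : A ≤ m := M.lift₁ ⊥ A m r hAc hfmr hwmr bot_le hAr
  have hwAm : M.We A m := M.two_of_three₃ A m r hAm hmr hwmr hwAr
  exact ⟨m, hcam, hwam, hfm, hAm, hwAm⟩

private theorem pinv_forward (M : ModelStr α) {A a b : α} (hAc : M.Cof ⊥ A)
    (hab : M.We a b) (h : PInv M A a) : PInv M A b := by
  obtain ⟨m, hcam, hwam, hfm, hAm, hwAm⟩ := pinv_upgrade M hAc h
  have hab_le : a ≤ b := M.we_le _ _ hab
  -- the pushout `b → b ⊔ m` is an acyclic cofibration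
  have hpush : M.Cof b (b ⊔ m) ∧ M.We b (b ⊔ m) := by
    refine M.max₂L b (b ⊔ m) le_sup_left (fun x y hf hbx hsy => ?_)
    have hax : a ≤ x := hab_le.trans hbx
    have hmy : m ≤ y := le_sup_right.trans hsy
    have hmx : m ≤ x := M.lift₂ a m x y hcam hwam hf hax hmy
    exact sup_le hbx hmx
  obtain ⟨r, hcsr, hwsr, hfr⟩ := M.fact₂ (b ⊔ m) ⊤ le_top
  have hsr : b ⊔ m ≤ r := M.cof_le _ _ hcsr
  have hwbr : M.We b r :=
    M.two_of_three₁ b (b ⊔ m) r le_sup_left hsr hpush.2 hwsr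
  have hwas : M.We a (b ⊔ m) :=
    M.two_of_three₁ a b (b ⊔ m) hab_le le_sup_left hab hpush.2
  have hwms : M.We m (b ⊔ m) :=
    M.two_of_three₂ a m (b ⊔ m) (M.cof_le _ _ hcam) le_sup_right hwam hwas
  have hwmr : M.We m r := M.two_of_three₁ m (b ⊔ m) r le_sup_right hsr hwms hwsr
  have hAr : A ≤ r := hAm.trans (le_sup_right.trans hsr)
  have hwAr : M.We A r :=
    M.two_of_three₁ A m r hAm (le_sup_right.trans hsr) hwAm hwmr
  exact ⟨r, hwbr, hfr, hAr, hwAr⟩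

private theorem pinv_backward (M : ModelStr α) {A a b : α}
    (hab : M.We a b) (h : PInv M A b) : PInv M A a := by
  obtain ⟨r, hbr, hrf, hAr, hwAr⟩ := h
  exact ⟨r, M.two_of_three₁ a b r (M.we_le _ _ hab) (M.we_le _ _ hbr) hab hbr,
    hrf, hAr, hwAr⟩

private theorem le_of_eqvGen (M : ModelStr α) {A A' : α}
    (hAc : M.Cof ⊥ A) (hA'f : M.Fib A' ⊤)
    (h : Relation.EqvGen M.We A A') : A ≤ A' := by
  have key : ∀ a b, Relation.EqvGen M.We a b → (PInv M A a ↔ PInv M A b) := by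
    intro a b hab
    induction hab with
    | rel a b hw => exact ⟨pinv_forward M hAc hw, pinv_backward M hw⟩
    | refl a => exact Iff.rfl
    | symm a b _ ih => exact ih.symm
    | trans a b c _ _ ih₁ ih₂ => exact ih₁.trans ih₂
  have hPA : PInv M A A := by
    obtain ⟨m, hcm, hwm, hfm⟩ := M.fact₂ A ⊤ le_top
    exact ⟨m, hwm, hfm, M.cof_le _ _ hcm, hwm⟩
  have hPA' : PInv M A A' := (key A A' h).mp hPA
  obtain ⟨m, hcm, hwm, hfm, hAm, hwAm⟩ := pinv_upgrade M hAc hPA'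
  have hmA' : m ≤ A' := M.lift₂ A' m A' ⊤ hcm hwm hA'f le_rfl le_top
  exact hAm.trans hmA'

/-- Two cofibrant-fibrant objects in the same weak equivalence class
(i.e. connected by a zigzag of weak equivalences) of a model structure on a bicomplete
skeletal poset are equal. -/
theorem cofibrant_fibrant_unique (M : ModelStr α) (A A' : α)
    (hAc : M.Cof ⊥ A) (hAf : M.Fib A ⊤)
    (hA'c : M.Cof ⊥ A') (hA'f : M.Fib A' ⊤)
    (h : Relation.EqvGen M.We A A') : A = A' :=
  le_antisymm (le_of_eqvGen M hAc hA'f h)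
    (le_of_eqvGen M hA'c hAf (Relation.EqvGen.symm _ _ h))
end
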